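/- arXiv:math/0005280 — 2 statements merged into one kernel-verified Lean document; each statement's English description precedes it below -/
import Mathlib

section
/- If A is an almost even Hermitian matrix over ℤπ and P is any square matrix over ℤπ, then P·A·conj(P)ᵗ is almost even. In particular, any matrix congruent to an almost even Hermitian matrix is almost even. -/
/-- The integral group ring ℤπ. -/
abbrev GroupRing (π : Type) [Group π] := MonoidAlgebra ℤ π

/-- The involution on ℤπ induced by g ↦ g⁻¹, extended ℤ-linearly. -/
noncomputable def GRconj {π : Type} [Group π] (x : GroupRing π) : GroupRing π :=
  MonoidAlgebra.ofCoeff (Finsupp.mapDomain (fun g : π => g⁻¹) x.coeff)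

/-- Entrywise involution followed by transpose: the conjugate-transpose of a matrix over ℤπ. -/
noncomputable def ctrans {π : Type} [Group π] {m n : Type} (A : Matrix m n (GroupRing π)) :
    Matrix n m (GroupRing π) :=
  (A.map GRconj).transpose

/-- A square matrix over ℤπ is Hermitian if conj(A)ᵗ = A. -/
def IsHermitianGR {π : Type} [Group π] {n : Type} (A : Matrix n n (GroupRing π)) : Prop :=
  ctrans A = A


/-- A matrix over ℤπ is almost even if for every g ∈ π with g² = 1 and g ≠ 1, the coefficient
of g in every diagonal entry is even. -/
def AlmostEven {π : Type} [Group π] {n : ℕ} (A : Matrix (Fin n) (Fin n) (GroupRing π)) : Prop :=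
  ∀ (i : Fin n) (g : π), g ^ 2 = 1 → g ≠ 1 → Even ((A i i).coeff g)

section Aux

variable {π : Type} [Group π]

lemma GRconj_apply (x : GroupRing π) (g : π) : (GRconj x).coeff g = x.coeff g⁻¹ := by
  have h : Function.Injective (fun g : π => g⁻¹) := fun a b h => by
    simpa using congrArg Inv.inv h
  have := Finsupp.mapDomain_apply h x.coeff g⁻¹
  simpa [GRconj] using this

lemma GRconj_add (x y : GroupRing π) : GRconj (x + y) = GRconj x + GRconj y := by
  unfold GRconj; rw [MonoidAlgebra.coeff_add, Finsupp.mapDomain_add]; rfl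

lemma GRconj_zero : GRconj (0 : GroupRing π) = 0 := by
  unfold GRconj; rw [MonoidAlgebra.coeff_zero, Finsupp.mapDomain_zero]; rfl

lemma GRconj_single (a : π) (c : ℤ) :
    GRconj (MonoidAlgebra.single a c) = MonoidAlgebra.single a⁻¹ c := by
  unfold GRconj; rw [MonoidAlgebra.coeff_single, Finsupp.mapDomain_single]; rfl

lemma GRconj_GRconj (x : GroupRing π) : GRconj (GRconj x) = x := by
  ext g; rw [GRconj_apply, GRconj_apply, inv_inv]

lemma GRconj_mul (x y : GroupRing π) : GRconj (x * y) = GRconj y * GRconj x := by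
  induction x using MonoidAlgebra.induction_linear with
  | zero => simp [GRconj_zero]
  | add f g hf hg => rw [add_mul, GRconj_add, hf, hg, GRconj_add, mul_add]
  | single a c =>
    induction y using MonoidAlgebra.induction_linear with
    | zero => simp [GRconj_zero]
    | add f g hf hg => rw [mul_add, GRconj_add, hf, hg, GRconj_add, add_mul]
    | single b d =>
      rw [MonoidAlgebra.single_mul_single, GRconj_single, GRconj_single, GRconj_single,
        MonoidAlgebra.single_mul_single, mul_inv_rev, mul_comm d c]

lemma even_add_GRconj (x : GroupRing π) {g : π} (hg : g ^ 2 = 1) :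
    Even ((x + GRconj x).coeff g) := by
  have hinv : g⁻¹ = g := by
    rw [pow_two] at hg
    exact inv_eq_of_mul_eq_one_right hg
  rw [MonoidAlgebra.coeff_add, Finsupp.add_apply, GRconj_apply, hinv]
  exact ⟨x.coeff g, rfl⟩

lemma conj_expand (a f f' : GroupRing π) (hconj : GRconj a = a) :
    (f + f') * a * GRconj (f + f')
      = f * a * GRconj f + f' * a * GRconj f'
        + (f * a * GRconj f' + GRconj (f * a * GRconj f')) := by
  rw [GRconj_mul, GRconj_mul, GRconj_GRconj, GRconj_add, hconj]
  noncomm_ring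

/-- Key scalar lemma: if `a` is conj-invariant and almost even, then `p * a * conj p`
has even coefficient at any nontrivial involution. -/
lemma even_conjugate (a : GroupRing π) (hconj : GRconj a = a)
    (ha : ∀ h : π, h ^ 2 = 1 → h ≠ 1 → Even (a.coeff h))
    (p : GroupRing π) {g : π} (hg : g ^ 2 = 1) (hg1 : g ≠ 1) :
    Even ((p * a * GRconj p).coeff g) := by
  refine MonoidAlgebra.induction_linear
    (motive := fun q : GroupRing π => Even ((q * a * GRconj q).coeff g)) p ?_ ?_ ?_
  · simp [GRconj_zero]
  · intro f f' hf hf'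
    rw [conj_expand a f f' hconj, MonoidAlgebra.coeff_add, Finsupp.add_apply,
        MonoidAlgebra.coeff_add (f * a * GRconj f), Finsupp.add_apply]
    exact ((hf.add hf').add (even_add_GRconj _ hg))
  · intro u c
    show Even ((MonoidAlgebra.single u c * a * GRconj (MonoidAlgebra.single u c)).coeff g)
    rw [GRconj_single, MonoidAlgebra.coeff_mul_single_apply, MonoidAlgebra.coeff_single_mul_apply, inv_inv]
    have h2 : (u⁻¹ * (g * u)) ^ 2 = 1 := by
      have e : (u⁻¹ * (g * u)) ^ 2 = u⁻¹ * (g * g) * u := by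
        rw [pow_two]
        simp [mul_assoc]
      rw [pow_two] at hg
      rw [e, hg, mul_one, inv_mul_cancel]
    have h1 : u⁻¹ * (g * u) ≠ 1 := by
      intro h
      apply hg1
      have hu : u = g * u := (inv_mul_eq_one.mp h)
      exact (right_eq_mul.mp hu)
    exact ((ha _ h2 h1).mul_left c).mul_right c

lemma grsum_apply {ι : Type*} (s : Finset ι) (F : ι → GroupRing π) (g : π) :
    (∑ k ∈ s, F k).coeff g = ∑ k ∈ s, (F k).coeff g := by
  rw [MonoidAlgebra.coeff_sum, Finsupp.finset_sum_apply]

lemma even_finset_sum {ι : Type*} (s : Finset ι) (f : ι → ℤ)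
    (h : ∀ i ∈ s, Even (f i)) : Even (∑ i ∈ s, f i) :=
  Finset.sum_induction f Even (fun _ _ => Even.add) Even.zero h

end Aux

/-- If A is almost even Hermitian, so is P·A·conj(P)ᵗ for any P; in particular any matrix
congruent to an almost even Hermitian matrix is almost even. -/
theorem almostEven_congruence (π : Type) [Group π] (n : ℕ)
    (A P : Matrix (Fin n) (Fin n) (GroupRing π))
    (hA : IsHermitianGR A) (hAE : AlmostEven A) :
    AlmostEven (P * A * ctrans P) := by
  intro i g hg hg1
  -- conj-symmetry of entries of A
  have hAc : ∀ j k, GRconj (A j k) = A k j := by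
    intro j k
    have := congrFun (congrFun hA k) j
    simpa [IsHermitianGR, ctrans, Matrix.transpose_apply, Matrix.map_apply] using this
  -- expand the (i,i) entry as a double sum
  have hentry : (P * A * ctrans P) i i
      = ∑ k : Fin n, ∑ j : Fin n, P i j * A j k * GRconj (P i k) := by
    simp only [Matrix.mul_apply, ctrans, Matrix.transpose_apply, Matrix.map_apply,
      Finset.sum_mul]
  rw [hentry]
  rw [show ((∑ k : Fin n, ∑ j : Fin n, P i j * A j k * GRconj (P i k)).coeff g)
      = ∑ k : Fin n, ∑ j : Fin n, (P i j * A j k * GRconj (P i k)).coeff g from by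
    rw [grsum_apply]
    exact Finset.sum_congr rfl fun k _ => grsum_apply _ _ _]
  -- abbreviate the coefficient of g in each term
  set z : Fin n → Fin n → ℤ := fun j k => (P i j * A j k * GRconj (P i k)).coeff g with hz
  -- diagonal terms are even
  have hdiag : ∀ t : Fin n, Even (z t t) := fun t =>
    even_conjugate (A t t) (hAc t t) (hAE t) (P i t) hg hg1
  -- symmetric pairs are even
  have hpair : ∀ j t : Fin n, Even (z j t + z t j) := by
    intro j t
    have hsym : GRconj (P i j * A j t * GRconj (P i t)) = P i t * A t j * GRconj (P i j) := by
      rw [GRconj_mul, GRconj_mul, GRconj_GRconj, hAc j t, mul_assoc]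
    have := even_add_GRconj (P i j * A j t * GRconj (P i t)) hg
    rw [MonoidAlgebra.coeff_add, Finsupp.add_apply, hsym] at this
    exact this
  -- induction on the index set
  have claim : ∀ s : Finset (Fin n), Even (∑ k ∈ s, ∑ j ∈ s, z j k) := by
    intro s
    induction s using Finset.induction_on with
    | empty => simp
    | insert t s ht ih =>
      have hsplit : ∑ k ∈ insert t s, ∑ j ∈ insert t s, z j k
          = z t t + (∑ j ∈ s, (z j t + z t j)) + ∑ k ∈ s, ∑ j ∈ s, z j k := by
        simp only [Finset.sum_insert ht, Finset.sum_add_distrib]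
        ring
      rw [hsplit]
      exact ((hdiag t).add (even_finset_sum _ _ fun j _ => hpair j t)).add ih
  exact claim Finset.univ
end

section
/- If A is an invertible almost even Hermitian matrix over ℤπ, then A⁻¹ is also almost even (and Hermitian). -/
section Aux

variable {π : Type} [Group π]

lemma GRconj_sum {α : Type*} (s : Finset α) (f : α → GroupRing π) :
    GRconj (∑ a ∈ s, f a) = ∑ a ∈ s, GRconj (f a) := by
  ext g
  rw [GRconj_apply, MonoidAlgebra.coeff_sum, MonoidAlgebra.coeff_sum, Finsupp.finset_sum_apply,
    Finsupp.finset_sum_apply]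
  exact Finset.sum_congr rfl fun a _ => (GRconj_apply (f a) g).symm

lemma GRconj_one : GRconj (1 : GroupRing π) = 1 := by
  have : (1 : GroupRing π) = MonoidAlgebra.single 1 1 := rfl
  rw [this, GRconj_single, inv_one]

lemma ctrans_mul {n : ℕ} (M N : Matrix (Fin n) (Fin n) (GroupRing π)) :
    ctrans (M * N) = ctrans N * ctrans M := by
  apply Matrix.ext
  intro i j
  simp only [ctrans, Matrix.transpose_apply, Matrix.map_apply, Matrix.mul_apply]
  rw [GRconj_sum]
  exact Finset.sum_congr rfl fun k _ => GRconj_mul _ _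

lemma ctrans_one {n : ℕ} : ctrans (1 : Matrix (Fin n) (Fin n) (GroupRing π)) = 1 := by
  apply Matrix.ext
  intro i j
  simp only [ctrans, Matrix.transpose_apply, Matrix.map_apply]
  rcases eq_or_ne i j with rfl | h
  · rw [Matrix.one_apply_eq, GRconj_one]
  · rw [Matrix.one_apply_ne (Ne.symm h), Matrix.one_apply_ne h, GRconj_zero]

/-- Expansion of a triple product as a triple sum of singles. -/
lemma triple_expand (x y z : GroupRing π) :
    x * y * z = ∑ t ∈ z.coeff.support, ∑ h ∈ y.coeff.support, ∑ s ∈ x.coeff.support,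
      MonoidAlgebra.single (s * h * t) (x.coeff s * y.coeff h * z.coeff t) := by
  conv_lhs => rw [← MonoidAlgebra.sum_coeff_single x, ← MonoidAlgebra.sum_coeff_single y,
    ← MonoidAlgebra.sum_coeff_single z]
  simp only [Finsupp.sum, Finset.sum_mul, Finset.mul_sum, MonoidAlgebra.single_mul_single]

lemma inv_eq_self_of_sq (g : π) (hg : g ^ 2 = 1) : g⁻¹ = g := by
  rw [pow_two] at hg
  exact inv_eq_of_mul_eq_one_left hg

lemma even_iff_zmod (m : ℤ) : Even m ↔ ((m : ZMod 2) = 0) := by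
  rw [ZMod.intCast_zmod_eq_zero_iff_dvd]
  exact even_iff_two_dvd

lemma cast_two_eq_zero : ((2 : ℤ) : ZMod 2) = 0 := by decide

/-- Key lemma: the quadratic form of an almost even Hermitian element is almost even. -/
lemma even_vav (v a : GroupRing π) (ha : GRconj a = a)
    (hae : ∀ h : π, h ^ 2 = 1 → h ≠ 1 → Even (a.coeff h))
    (g : π) (hg : g ^ 2 = 1) (hg1 : g ≠ 1) :
    (((v * a * GRconj v).coeff g : ℤ) : ZMod 2) = 0 := by
  classical
  have hginv : g⁻¹ = g := inv_eq_self_of_sq g hg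
  have hexp : ((v * a * GRconj v).coeff g : ℤ)
      = ∑ t ∈ (GRconj v).coeff.support, ∑ h ∈ a.coeff.support, ∑ s ∈ v.coeff.support,
        (if s * h * t = g then (v.coeff s * a.coeff h * (GRconj v).coeff t : ℤ) else 0) := by
    rw [triple_expand]
    rw [MonoidAlgebra.coeff_sum, Finsupp.finset_sum_apply]
    refine Finset.sum_congr rfl fun t _ => ?_
    rw [MonoidAlgebra.coeff_sum, Finsupp.finset_sum_apply]
    refine Finset.sum_congr rfl fun h _ => ?_
    rw [MonoidAlgebra.coeff_sum, Finsupp.finset_sum_apply]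
    refine Finset.sum_congr rfl fun s _ => ?_
    rw [MonoidAlgebra.coeff_single, Finsupp.single_apply]
  have hcast : (((v * a * GRconj v).coeff g : ℤ) : ZMod 2)
      = ∑ p ∈ (GRconj v).coeff.support ×ˢ a.coeff.support ×ˢ v.coeff.support,
        (if p.2.2 * p.2.1 * p.1 = g then
          ((v.coeff p.2.2 * a.coeff p.2.1 * (GRconj v).coeff p.1 : ℤ) : ZMod 2) else 0) := by
    rw [hexp]
    push_cast [apply_ite (fun m : ℤ => (m : ZMod 2))]
    rw [Finset.sum_product]
    refine Finset.sum_congr rfl fun t _ => ?_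
    rw [Finset.sum_product]
  rw [hcast]
  have haconj : ∀ h : π, a.coeff h⁻¹ = a.coeff h := by
    intro h
    conv_rhs => rw [← ha]
    rw [GRconj_apply]
  have hvconj : ∀ t : π, (GRconj v).coeff t = v.coeff t⁻¹ := fun t => GRconj_apply v t
  apply Finset.sum_involution (g := fun p _ => (p.2.2⁻¹, p.2.1⁻¹, p.1⁻¹))
  · rintro ⟨t, h, s⟩ _
    have hiff : t⁻¹ * h⁻¹ * s⁻¹ = g ↔ s * h * t = g := by
      constructor
      · intro hh
        simpa [mul_assoc, hginv] using congrArg Inv.inv hh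
      · intro hh
        simpa [mul_assoc, hginv] using congrArg Inv.inv hh
    by_cases hc : s * h * t = g
    · rw [if_pos hc, if_pos (hiff.2 hc)]
      have heq : (v.coeff t⁻¹ * a.coeff h⁻¹ * (GRconj v).coeff s⁻¹ : ℤ) = v.coeff s * a.coeff h * (GRconj v).coeff t := by
        rw [haconj, hvconj, hvconj, inv_inv]
        ring
      show _ + ((v.coeff t⁻¹ * a.coeff h⁻¹ * (GRconj v).coeff s⁻¹ : ℤ) : ZMod 2) = 0
      rw [heq, ← two_mul]
      rw [show ((2 : ZMod 2)) = 0 by decide, zero_mul]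
    · rw [if_neg hc, if_neg (fun hh => hc (hiff.1 hh))]
      rw [add_zero]
  · rintro ⟨t, h, s⟩ _ hne heq
    simp only [Prod.mk.injEq] at heq
    obtain ⟨hst, hhh, -⟩ := heq
    apply hne
    by_cases hc : s * h * t = g
    · rw [if_pos hc]
      have hh2 : h ^ 2 = 1 := by
        rw [pow_two]
        exact mul_eq_one_iff_inv_eq.mpr hhh
      have hh1 : h ≠ 1 := by
        intro h1
        apply hg1
        rw [← hc, h1, mul_one, ← hst, mul_inv_cancel]
      obtain ⟨m, hm⟩ := hae h hh2 hh1
      rw [hm]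
      push_cast
      rw [show ((m : ZMod 2) + m) = 2 * m by ring]
      rw [show ((2 : ZMod 2)) = 0 by decide, zero_mul, mul_zero, zero_mul]
    · exact if_neg hc
  · rintro ⟨t, h, s⟩ _
    simp
  · rintro ⟨t, h, s⟩ hmem
    simp only [Finset.mem_product, Finsupp.mem_support_iff] at hmem
    obtain ⟨h1, h2, h3⟩ := hmem
    simp only [Finset.mem_product, Finsupp.mem_support_iff]
    refine And.intro ?_ (And.intro ?_ ?_)
    · rw [hvconj, inv_inv]; exact h3
    · rw [haconj]; exact h2
    · rw [← hvconj]; exact h1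

end Aux

/-- The inverse of an invertible almost even Hermitian matrix is almost even and Hermitian. -/
theorem almostEven_inv (π : Type) [Group π] (n : ℕ)
    (A B : Matrix (Fin n) (Fin n) (GroupRing π))
    (hA : IsHermitianGR A) (hAE : AlmostEven A)
    (hAB : A * B = 1) (hBA : B * A = 1) :
    AlmostEven B ∧ IsHermitianGR B := by
  classical
  have hB : IsHermitianGR B := by
    have h1 : ctrans B * A = 1 := by
      calc ctrans B * A = ctrans B * ctrans A := by rw [hA]
        _ = ctrans (A * B) := (ctrans_mul A B).symm
        _ = 1 := by rw [hAB, ctrans_one]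
    calc ctrans B = ctrans B * 1 := by rw [mul_one]
      _ = ctrans B * (A * B) := by rw [hAB]
      _ = (ctrans B * A) * B := by rw [mul_assoc]
      _ = B := by rw [h1, one_mul]
  refine ⟨?_, hB⟩
  intro i g hg hg1
  have hginv : g⁻¹ = g := inv_eq_self_of_sq g hg
  have hBAB : B * A * B = B := by rw [mul_assoc, hAB, mul_one]
  have hBconj : ∀ k : Fin n, B k i = GRconj (B i k) := by
    intro k
    conv_lhs => rw [← hB]
    rfl
  have hexp : B i i = ∑ k : Fin n, ∑ j : Fin n, B i j * A j k * GRconj (B i k) := by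
    conv_lhs => rw [← hBAB]
    rw [Matrix.mul_apply]
    refine Finset.sum_congr rfl fun k _ => ?_
    rw [Matrix.mul_apply, Finset.sum_mul]
    exact Finset.sum_congr rfl fun j _ => by rw [hBconj]
  rw [even_iff_zmod, hexp]
  have hsum : (((∑ k : Fin n, ∑ j : Fin n, B i j * A j k * GRconj (B i k)).coeff g : ℤ) : ZMod 2)
      = ∑ p ∈ (Finset.univ ×ˢ Finset.univ : Finset (Fin n × Fin n)),
        (((B i p.2 * A p.2 p.1 * GRconj (B i p.1)).coeff g : ℤ) : ZMod 2) := by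
    rw [MonoidAlgebra.coeff_sum, Finsupp.finset_sum_apply]
    push_cast
    rw [Finset.sum_product]
    refine Finset.sum_congr rfl fun k _ => ?_
    rw [MonoidAlgebra.coeff_sum, Finsupp.finset_sum_apply]
    push_cast
    rfl
  rw [hsum]
  have hAconj : ∀ j k : Fin n, GRconj (A j k) = A k j := by
    intro j k
    conv_rhs => rw [← hA]
    rfl
  apply Finset.sum_involution (g := fun p _ => (p.2, p.1))
  · rintro ⟨k, j⟩ _
    have key : B i k * A k j * GRconj (B i j) = GRconj (B i j * A j k * GRconj (B i k)) := by
      rw [GRconj_mul, GRconj_mul, GRconj_GRconj, hAconj, mul_assoc]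
    show _ + (((B i k * A k j * GRconj (B i j)).coeff g : ℤ) : ZMod 2) = 0
    rw [key, GRconj_apply, hginv, ← two_mul]
    rw [show ((2 : ZMod 2)) = 0 by decide, zero_mul]
  · rintro ⟨k, j⟩ _ hne heq
    simp only [Prod.mk.injEq] at heq
    obtain ⟨hkj, -⟩ := heq
    apply hne
    simp only
    rw [hkj]
    exact even_vav (B i k) (A k k) (hAconj k k) (fun h h2 h1 => hAE k h h2 h1) g hg hg1
  · rintro ⟨k, j⟩ _
    simp
  · rintro ⟨k, j⟩ _
    rfl
end
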